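/- Let Ω be a witness and let τ be an unambiguous and causal trace. If the constraint graph G(Ω)(τ) has a cycle, then it has a k-nice cycle for some k with 1 ≤ k ≤ min{n,m}. -/

import Mathlib

/-- A memory operation: read or write. -/
inductive MemOp : Type
  | R : MemOp
  | W : MemOp
deriving DecidableEq

/-- A memory event ⟨op, proc, loc, data⟩. -/
structure MemEvent : Type where
  op : MemOp
  proc : ℕ
  loc : ℕ
  data : ℕ
deriving DecidableEq

instance : Inhabited MemEvent := ⟨⟨MemOp.R, 1, 1, 0⟩⟩

/-- A trace is a finite sequence of memory events (1-indexed via `ev`). -/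
abbrev MTrace := List MemEvent

/-- The x-th event of a trace (1-indexed). -/
def ev (τ : MTrace) (x : ℕ) : MemEvent := τ.getD (x - 1) default

/-- dom(τ) = {1, …, |τ|}. -/
def Dom (τ : MTrace) : Set ℕ := {x | 1 ≤ x ∧ x ≤ τ.length}

/-- P(τ,i): indices of events of processor i. -/
def Pset (τ : MTrace) (i : ℕ) : Set ℕ := {x | x ∈ Dom τ ∧ (ev τ x).proc = i}

/-- L(τ,j): indices of events to location j. -/
def Lset (τ : MTrace) (j : ℕ) : Set ℕ := {x | x ∈ Dom τ ∧ (ev τ x).loc = j}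

/-- L^w(τ,j): indices of write events to location j. -/
def Lw (τ : MTrace) (j : ℕ) : Set ℕ := {x | x ∈ Lset τ j ∧ (ev τ x).op = MemOp.W}

/-- L^r(τ,j): indices of read events to location j. -/
def Lr (τ : MTrace) (j : ℕ) : Set ℕ := {x | x ∈ Lset τ j ∧ (ev τ x).op = MemOp.R}

/-- A trace is unambiguous if every write event has a nonzero data value distinct
from that of every other write event to the same location. -/
def Unambiguous (τ : MTrace) : Prop :=
  ∀ j, ∀ x ∈ Lw τ j, (ev τ x).data ≠ 0 ∧
    ∀ y ∈ Lw τ j, y ≠ x → (ev τ y).data ≠ (ev τ x).data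

/-- A trace is causal if the data value of every read event is 0 or equals the data
value of some write event to the same location. -/
def Causal (τ : MTrace) : Prop :=
  ∀ j, ∀ x ∈ Lr τ j, (ev τ x).data = 0 ∨ ∃ y ∈ Lw τ j, (ev τ y).data = (ev τ x).data

/-- ⟨x,y⟩ ∈ M(τ,i): the total order on P(τ,i) given by index order. -/
def Mrel (τ : MTrace) (i : ℕ) (x y : ℕ) : Prop :=
  x ∈ Pset τ i ∧ y ∈ Pset τ i ∧ x < y

/-- A sequence of memory events (given by its length and 1-indexed access function)
is serial: each event's data value equals that of the latest write to the same
location at an index no larger than its own, and equals 0 if no such write exists. -/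
def SerialFn (len : ℕ) (e : ℕ → MemEvent) : Prop :=
  ∀ u, 1 ≤ u → u ≤ len →
    ((∀ k, 1 ≤ k → k ≤ u → ¬((e k).op = MemOp.W ∧ (e k).loc = (e u).loc)) →
       (e u).data = 0) ∧
    (∀ k, 1 ≤ k → k ≤ u → (e k).op = MemOp.W → (e k).loc = (e u).loc →
       (∀ k', k < k' → k' ≤ u → ¬((e k').op = MemOp.W ∧ (e k').loc = (e u).loc)) →
       (e u).data = (e k).data)

/-- f (with inverse g) is a permutation of {1,…,|τ|} satisfying conditions C1 and C2. -/
def IsSCWitness (τ : MTrace) (f g : ℕ → ℕ) : Prop :=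
  (∀ u ∈ Dom τ, f u ∈ Dom τ) ∧
  (∀ u ∈ Dom τ, g u ∈ Dom τ) ∧
  (∀ u ∈ Dom τ, g (f u) = u) ∧
  (∀ u ∈ Dom τ, f (g u) = u) ∧
  (∀ i u v, Mrel τ i u v → f u < f v) ∧
  SerialFn τ.length (fun x => ev τ (g x))

/-- A trace is sequentially consistent if some permutation satisfies C1 and C2. -/
def SeqConsistent (τ : MTrace) : Prop := ∃ f g, IsSCWitness τ f g

/-- A witness assigns to each trace and location a strict total order on L^w(τ,j). -/
def IsWitness (Ω : MTrace → ℕ → ℕ → ℕ → Prop) : Prop :=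
  ∀ τ j,
    (∀ x y, Ω τ j x y → x ∈ Lw τ j ∧ y ∈ Lw τ j) ∧
    (∀ x, ¬ Ω τ j x x) ∧
    (∀ x y z, Ω τ j x y → Ω τ j y z → Ω τ j x z) ∧
    (∀ x y, x ∈ Lw τ j → y ∈ Lw τ j → x ≠ y → Ω τ j x y ∨ Ω τ j y x)

/-- A witness is simple if it orders the writes to each location by index order. -/
def IsSimple (Ω : MTrace → ℕ → ℕ → ℕ → Prop) : Prop :=
  ∀ τ j x y, Ω τ j x y ↔ (x ∈ Lw τ j ∧ y ∈ Lw τ j ∧ x < y)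

/-- ⟨x,y⟩ ∈ Ω^e(τ,j): the extension of the witness order to all events to location j. -/
def OmegaE (Ω : MTrace → ℕ → ℕ → ℕ → Prop) (τ : MTrace) (j x y : ℕ) : Prop :=
  x ∈ Lset τ j ∧ y ∈ Lset τ j ∧
  (((ev τ x).data = (ev τ y).data ∧ (ev τ x).op = MemOp.W ∧ (ev τ y).op = MemOp.R) ∨
   ((ev τ x).data = 0 ∧ (ev τ y).data ≠ 0) ∨
   (∃ a b, a ∈ Lw τ j ∧ b ∈ Lw τ j ∧ Ω τ j a b ∧
      (ev τ a).data = (ev τ x).data ∧ (ev τ b).data = (ev τ y).data))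

/-- Edge of the constraint graph G(Ω)(τ): union of the M(τ,i) and the Ω^e(τ,j). -/
def GEdge (Ω : MTrace → ℕ → ℕ → ℕ → Prop) (τ : MTrace) (x y : ℕ) : Prop :=
  (∃ i, Mrel τ i x y) ∨ (∃ j, OmegaE Ω τ j x y)

/-- The constraint graph G(Ω)(τ) has a cycle. -/
def HasCycle (Ω : MTrace → ℕ → ℕ → ℕ → Prop) (τ : MTrace) : Prop :=
  ∃ x, Relation.TransGen (GEdge Ω τ) x x

/-- The constraint graph G(Ω)(τ) is acyclic. -/
def Acyclic (Ω : MTrace → ℕ → ℕ → ℕ → Prop) (τ : MTrace) : Prop :=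
  ¬ HasCycle Ω τ

/-- All events of the trace have processor in {1,…,n} and location in {1,…,m}. -/
def InRange (n m : ℕ) (τ : MTrace) : Prop :=
  ∀ e ∈ τ, 1 ≤ e.proc ∧ e.proc ≤ n ∧ 1 ≤ e.loc ∧ e.loc ≤ m

/-- All data values in the trace lie in {0,…,v}. -/
def DataBounded (v : ℕ) (τ : MTrace) : Prop := ∀ e ∈ τ, e.data ≤ v

/-- A memory system with n processors and m locations: for each v ≥ 1, a set S(n,m,v)
of traces whose processors, locations, and data values are in range. -/
structure MemSystem (n m : ℕ) : Type where
  S : ℕ → Set MTrace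
  wf : ∀ v, 1 ≤ v → ∀ τ ∈ S v, InRange n m τ ∧ DataBounded v τ

/-- S(n,m): the union of the S(n,m,v) over v ≥ 1. -/
def MemSystem.traces {n m : ℕ} (M : MemSystem n m) : Set MTrace :=
  {τ | ∃ v, 1 ≤ v ∧ τ ∈ M.S v}

/-- A renaming function λ with λ(j,0) = 0 for every location j. -/
def IsRenaming (lam : ℕ → ℕ → ℕ) : Prop := ∀ j, lam j 0 = 0

/-- λ^d: rename the data value of each event according to its location. -/
def renameD (lam : ℕ → ℕ → ℕ) (τ : MTrace) : MTrace :=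
  τ.map fun e => { e with data := lam e.loc e.data }

/-- The memory system is data independent: a trace is in S(n,m,v) iff it is obtained
from an unambiguous trace of S(n,m) by a renaming function with values in {0,…,v}. -/
def DataIndependent {n m : ℕ} (M : MemSystem n m) : Prop :=
  ∀ v, 1 ≤ v → ∀ τ, τ ∈ M.S v ↔
    ∃ τ' lam, τ' ∈ M.traces ∧ Unambiguous τ' ∧ IsRenaming lam ∧
      (∀ j d, lam j d ≤ v) ∧ τ = renameD lam τ'

/-- λ^p: rename the processor of each event. -/
def renameP (lam : ℕ → ℕ) (τ : MTrace) : MTrace :=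
  τ.map fun e => { e with proc := lam e.proc }

/-- λ^l: rename the location of each event. -/
def renameL (lam : ℕ → ℕ) (τ : MTrace) : MTrace :=
  τ.map fun e => { e with loc := lam e.loc }

/-- λ is a permutation of {1,…,n}. -/
def PermOn (n : ℕ) (lam : ℕ → ℕ) : Prop :=
  Set.BijOn lam (Set.Icc 1 n) (Set.Icc 1 n)

/-- The memory system is processor symmetric. -/
def ProcSymmetric {n m : ℕ} (M : MemSystem n m) : Prop :=
  ∀ lam, PermOn n lam → ∀ v τ, τ ∈ M.S v → renameP lam τ ∈ M.S v

/-- The memory system is location symmetric. -/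
def LocSymmetric {n m : ℕ} (M : MemSystem n m) : Prop :=
  ∀ lam, PermOn m lam → ∀ v τ, τ ∈ M.S v → renameL lam τ ∈ M.S v

/-- x ⊕ 1 in the cyclic group {1,…,k} with identity k. -/
def cyc (k x : ℕ) : ℕ := if x = k then 1 else x + 1

/-- A k-nice cycle u_1,v_1,…,u_k,v_k in G(Ω)(τ): distinct vertices; each ⟨u_x,v_x⟩
is a processor edge, each ⟨v_x,u_{x⊕1}⟩ a location edge; no processor (resp.
location) contributes two edges. -/
def NiceCycle (Ω : MTrace → ℕ → ℕ → ℕ → Prop) (τ : MTrace) (k : ℕ)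
    (u v : ℕ → ℕ) : Prop :=
  1 ≤ k ∧
  (∀ x ∈ Set.Icc 1 k, ∀ y ∈ Set.Icc 1 k, x ≠ y → u x ≠ u y) ∧
  (∀ x ∈ Set.Icc 1 k, ∀ y ∈ Set.Icc 1 k, x ≠ y → v x ≠ v y) ∧
  (∀ x ∈ Set.Icc 1 k, ∀ y ∈ Set.Icc 1 k, u x ≠ v y) ∧
  (∀ x ∈ Set.Icc 1 k, ∃ i, Mrel τ i (u x) (v x)) ∧
  (∀ x ∈ Set.Icc 1 k, ∃ j, OmegaE Ω τ j (v x) (u (cyc k x))) ∧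
  (∀ x ∈ Set.Icc 1 k, ∀ y ∈ Set.Icc 1 k, x ≠ y → ∀ i,
     Mrel τ i (u x) (v x) → ¬ Mrel τ i (u y) (v y)) ∧
  (∀ x ∈ Set.Icc 1 k, ∀ y ∈ Set.Icc 1 k, x ≠ y → ∀ j,
     OmegaE Ω τ j (v x) (u (cyc k x)) → ¬ OmegaE Ω τ j (v y) (u (cyc k y)))

/-- A canonical k-nice cycle: a k-nice cycle whose processor edges are in M(τ,x) and
whose location edges are in Ω^e(τ,x⊕1), for x = 1,…,k. -/
def CanonicalNiceCycle (Ω : MTrace → ℕ → ℕ → ℕ → Prop) (τ : MTrace) (k : ℕ)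
    (u v : ℕ → ℕ) : Prop :=
  NiceCycle Ω τ k u v ∧
  (∀ x ∈ Set.Icc 1 k, Mrel τ x (u x) (v x)) ∧
  (∀ x ∈ Set.Icc 1 k, OmegaE Ω τ (cyc k x) (v x) (u (cyc k x)))

/-- The trace satisfies the automaton Constrain_k(j). -/
def ConstrainK (k j : ℕ) (τ : MTrace) : Prop :=
  (j ≤ k →
    (∀ x ∈ Lw τ j, (ev τ x).data ≤ 2) ∧
    (∀ x ∈ Lw τ j, ∀ y ∈ Lw τ j, (ev τ x).data = 1 → (ev τ y).data = 1 → x = y) ∧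
    (∀ x ∈ Lw τ j, ∀ y ∈ Lw τ j, (ev τ x).data = 0 → (ev τ y).data ≠ 0 → x < y) ∧
    (∀ y ∈ Lw τ j, (ev τ y).data = 2 → ∃ x ∈ Lw τ j, (ev τ x).data = 1 ∧ x < y)) ∧
  (k < j → ∀ x ∈ Lw τ j, (ev τ x).data = 0)

/-- The trace satisfies the automaton Check_k(i). -/
def CheckK (k i : ℕ) (τ : MTrace) : Prop :=
  ∃ x ∈ Dom τ, ∃ y ∈ Dom τ, x < y ∧
    (ev τ x).proc = i ∧ (ev τ x).loc = i ∧
    ((ev τ x).data = 1 ∨ (ev τ x).data = 2) ∧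
    (ev τ y).proc = i ∧ (ev τ y).loc = cyc k i ∧
    ((ev τ y).data = 0 ∨ ((ev τ y).op = MemOp.W ∧ (ev τ y).data = 1))


namespace NiceProofAux

variable {Ω : MTrace → ℕ → ℕ → ℕ → Prop} {τ : MTrace}

/-- Data-value order induced by the witness. -/
def Dlt (Ω : MTrace → ℕ → ℕ → ℕ → Prop) (τ : MTrace) (j d d' : ℕ) : Prop :=
  (d = 0 ∧ d' ≠ 0) ∨
    ∃ a b, a ∈ Lw τ j ∧ b ∈ Lw τ j ∧ Ω τ j a b ∧ (ev τ a).data = d ∧ (ev τ b).data = d'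

lemma omegaE_iff {j x y : ℕ} :
    OmegaE Ω τ j x y ↔ x ∈ Lset τ j ∧ y ∈ Lset τ j ∧
      (((ev τ x).data = (ev τ y).data ∧ (ev τ x).op = MemOp.W ∧ (ev τ y).op = MemOp.R) ∨
        Dlt Ω τ j (ev τ x).data (ev τ y).data) := Iff.rfl

lemma uniqW (hU : Unambiguous τ) {j a b : ℕ} (ha : a ∈ Lw τ j) (hb : b ∈ Lw τ j)
    (hd : (ev τ a).data = (ev τ b).data) : a = b := by
  by_contra hne
  exact (hU j b hb).2 a ha hne hd

lemma dataW_ne (hU : Unambiguous τ) {j a : ℕ} (ha : a ∈ Lw τ j) : (ev τ a).data ≠ 0 :=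
  (hU j a ha).1

lemma Dlt_irrefl (hΩ : IsWitness Ω) (hU : Unambiguous τ) {j d : ℕ} : ¬ Dlt Ω τ j d d := by
  rintro (⟨h0, hne⟩ | ⟨a, b, ha, hb, hab, hda, hdb⟩)
  · exact hne h0
  · have hab' : a = b := uniqW hU ha hb (by rw [hda, hdb])
    subst hab'
    exact (hΩ τ j).2.1 a hab

lemma Dlt_trans (hΩ : IsWitness Ω) (hU : Unambiguous τ) {j d₁ d₂ d₃ : ℕ}
    (h1 : Dlt Ω τ j d₁ d₂) (h2 : Dlt Ω τ j d₂ d₃) : Dlt Ω τ j d₁ d₃ := by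
  rcases h1 with ⟨h0, hne⟩ | ⟨a, b, ha, hb, hab, hda, hdb⟩
  · rcases h2 with ⟨h0', hne'⟩ | ⟨a', b', ha', hb', hab', hda', hdb'⟩
    · exact absurd h0' hne
    · exact Or.inl ⟨h0, by rw [← hdb']; exact dataW_ne hU hb'⟩
  · rcases h2 with ⟨h0', hne'⟩ | ⟨a', b', ha', hb', hab', hda', hdb'⟩
    · exact absurd (hdb.trans h0') (dataW_ne hU hb)
    · have hba : b = a' := uniqW hU hb ha' (by rw [hdb, hda'])
      exact Or.inr ⟨a, b', ha, hb', (hΩ τ j).2.2.1 a b b' hab (hba.symm ▸ hab'), hda, hdb'⟩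

lemma realized (hC : Causal τ) {j x : ℕ} (hx : x ∈ Lset τ j) :
    (ev τ x).data = 0 ∨ ∃ w ∈ Lw τ j, (ev τ w).data = (ev τ x).data := by
  cases hop : (ev τ x).op with
  | R => exact hC j x ⟨hx, hop⟩
  | W => exact Or.inr ⟨x, ⟨hx, hop⟩, rfl⟩

lemma Dlt_tri (hΩ : IsWitness Ω) (hU : Unambiguous τ) {j d d' : ℕ}
    (hd : d = 0 ∨ ∃ w ∈ Lw τ j, (ev τ w).data = d)
    (hd' : d' = 0 ∨ ∃ w ∈ Lw τ j, (ev τ w).data = d') :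
    Dlt Ω τ j d d' ∨ d = d' ∨ Dlt Ω τ j d' d := by
  by_cases heq : d = d'
  · exact Or.inr (Or.inl heq)
  rcases hd with rfl | ⟨w, hw, hdw⟩
  · rcases hd' with rfl | ⟨w', hw', hdw'⟩
    · exact absurd rfl heq
    · exact Or.inl (Or.inl ⟨rfl, by rw [← hdw']; exact dataW_ne hU hw'⟩)
  · rcases hd' with rfl | ⟨w', hw', hdw'⟩
    · exact Or.inr (Or.inr (Or.inl ⟨rfl, by rw [← hdw]; exact dataW_ne hU hw⟩))
    · have hne : w ≠ w' := by rintro rfl; exact heq (hdw.symm.trans hdw')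
      rcases (hΩ τ j).2.2.2 w w' hw hw' hne with h | h
      · exact Or.inl (Or.inr ⟨w, w', hw, hw', h, hdw, hdw'⟩)
      · exact Or.inr (Or.inr (Or.inr ⟨w', w, hw', hw, h, hdw', hdw⟩))

lemma omegaE_irrefl (hΩ : IsWitness Ω) (hU : Unambiguous τ) {j x : ℕ} :
    ¬ OmegaE Ω τ j x x := by
  rw [omegaE_iff]
  rintro ⟨-, -, ⟨-, hW, hR⟩ | hD⟩
  · rw [hW] at hR; exact MemOp.noConfusion hR
  · exact Dlt_irrefl hΩ hU hD

lemma omegaE_trans (hΩ : IsWitness Ω) (hU : Unambiguous τ) {j x y z : ℕ}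
    (h1 : OmegaE Ω τ j x y) (h2 : OmegaE Ω τ j y z) : OmegaE Ω τ j x z := by
  rw [omegaE_iff] at h1 h2 ⊢
  obtain ⟨hx, hy, h1⟩ := h1
  obtain ⟨-, hz, h2⟩ := h2
  refine ⟨hx, hz, ?_⟩
  rcases h1 with ⟨e1, w1, r1⟩ | hD1
  · rcases h2 with ⟨e2, w2, r2⟩ | hD2
    · rw [w2] at r1; exact absurd r1 (by simp)
    · exact Or.inr (e1.symm ▸ hD2)
  · rcases h2 with ⟨e2, w2, r2⟩ | hD2
    · exact Or.inr (e2 ▸ hD1)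
    · exact Or.inr (Dlt_trans hΩ hU hD1 hD2)

lemma omegaE_locs {j x y : ℕ} (h : OmegaE Ω τ j x y) :
    (ev τ x).loc = j ∧ (ev τ y).loc = j := ⟨h.1.2, h.2.1.2⟩

lemma omegaE_comp (hΩ : IsWitness Ω) (hU : Unambiguous τ) {j j' x y z : ℕ}
    (h1 : OmegaE Ω τ j x y) (h2 : OmegaE Ω τ j' y z) : OmegaE Ω τ j x z := by
  have hj : j' = j := by rw [← (omegaE_locs h2).1, (omegaE_locs h1).2]
  exact omegaE_trans hΩ hU h1 (hj ▸ h2)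

lemma omegaE_cmp (hΩ : IsWitness Ω) (hU : Unambiguous τ) (hC : Causal τ) {j a b c d : ℕ}
    (h1 : OmegaE Ω τ j a b) (h2 : OmegaE Ω τ j c d) :
    OmegaE Ω τ j a d ∨ OmegaE Ω τ j c b := by
  rw [omegaE_iff] at h1 h2
  simp only [omegaE_iff]
  obtain ⟨ha, hb, h1⟩ := h1
  obtain ⟨hc, hd, h2⟩ := h2
  rcases Dlt_tri hΩ hU (realized hC ha) (realized hC hd) with ht | ht | ht
  · exact Or.inl ⟨ha, hd, Or.inr ht⟩
  · rcases h1 with ⟨e1, w1, r1⟩ | hD1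
    · rcases h2 with ⟨e2, w2, r2⟩ | hD2
      · exact Or.inl ⟨ha, hd, Or.inl ⟨ht, w1, r2⟩⟩
      · refine Or.inr ⟨hc, hb, Or.inr ?_⟩
        rw [← e1, ht]; exact hD2
    · rcases h2 with ⟨e2, w2, r2⟩ | hD2
      · refine Or.inr ⟨hc, hb, Or.inr ?_⟩
        rw [e2, ← ht]; exact hD1
      · exact Or.inr ⟨hc, hb, Or.inr (Dlt_trans hΩ hU hD2 (ht ▸ hD1))⟩
  · have hI : Dlt Ω τ j (ev τ c).data (ev τ a).data := by
      rcases h2 with ⟨e2, w2, r2⟩ | hD2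
      · rw [e2]; exact ht
      · exact Dlt_trans hΩ hU hD2 ht
    refine Or.inr ⟨hc, hb, Or.inr ?_⟩
    rcases h1 with ⟨e1, w1, r1⟩ | hD1
    · rw [← e1]; exact hI
    · exact Dlt_trans hΩ hU hI hD1

lemma Mrel_comp {i i' x y z : ℕ} (h1 : Mrel τ i x y) (h2 : Mrel τ i' y z) : Mrel τ i x z := by
  obtain ⟨hx, hy, hlt⟩ := h1
  obtain ⟨hy', hz, hlt'⟩ := h2
  have hii : i = i' := by rw [← hy.2, hy'.2]
  subst hii
  exact ⟨hx, hz, lt_trans hlt hlt'⟩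

lemma Mrel_short {i x y z w : ℕ} (h1 : Mrel τ i x y) (h2 : Mrel τ i z w) :
    Mrel τ i x w ∨ Mrel τ i z y := by
  obtain ⟨hx, hy, hlt⟩ := h1
  obtain ⟨hz, hw, hlt'⟩ := h2
  by_cases h : x < w
  · exact Or.inl ⟨hx, hw, h⟩
  · exact Or.inr ⟨hz, hy, by omega⟩

lemma per_mod {α : Type*} {k : ℕ} {f : ℕ → α} (hp : ∀ z, f (z + k) = f z)
    {a b : ℕ} (h : a % k = b % k) : f a = f b := by
  have key : ∀ c z, f (z + c * k) = f z := by
    intro c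
    induction c with
    | zero => simp
    | succ c ih =>
      intro z
      have e : z + (c + 1) * k = (z + c * k) + k := by ring
      rw [e, hp, ih]
  have ha : f a = f (a % k) := by
    conv_lhs => rw [← Nat.mod_add_div' a k]
    exact key _ _
  have hb : f b = f (b % k) := by
    conv_lhs => rw [← Nat.mod_add_div' b k]
    exact key _ _
  rw [ha, hb, h]

lemma mod_step {m z : ℕ} (hm : 1 ≤ m) :
    (z + 1) % m = if z % m = m - 1 then 0 else z % m + 1 := by
  have h1 : z % m < m := Nat.mod_lt _ (by omega)
  by_cases h : z % m = m - 1
  · rw [if_pos h]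
    rw [Nat.add_mod, h]
    rcases Nat.eq_or_lt_of_le hm with h2 | h2
    · simp [← h2]
    · rw [Nat.mod_eq_of_lt (by omega : 1 < m)]
      simp [show m - 1 + 1 = m by omega]
  · rw [if_neg h]
    rw [Nat.add_mod]
    have h2 : 1 < m := by
      rcases Nat.eq_or_lt_of_le hm with h2 | h2
      · exfalso; apply h; omega
      · exact h2
    rw [Nat.mod_eq_of_lt h2, Nat.mod_eq_of_lt (by omega)]

/-! ### Cyclic structures -/

def FCyc (Ω : MTrace → ℕ → ℕ → ℕ → Prop) (τ : MTrace) (k : ℕ) (f : ℕ → ℕ × ℕ) : Prop :=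
  1 ≤ k ∧ (∀ z, f (z + k) = f z) ∧
  (∀ z, ∃ i, Mrel τ i (f z).1 (f z).2) ∧
  (∀ z, ∃ j, OmegaE Ω τ j (f z).2 (f (z + 1)).1)

def CWalk (Ω : MTrace → ℕ → ℕ → ℕ → Prop) (τ : MTrace) (len : ℕ) (p : ℕ → ℕ) : Prop :=
  1 ≤ len ∧ (∀ z, p (z + len) = p z) ∧ ∀ z, GEdge Ω τ (p z) (p (z + 1))

lemma FCyc_rot {k : ℕ} {f : ℕ → ℕ × ℕ} (h : FCyc Ω τ k f) (t : ℕ) :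
    FCyc Ω τ k (fun z => f (z + t)) := by
  obtain ⟨hk, hp, hM, hO⟩ := h
  refine ⟨hk, fun z => ?_, fun z => hM _, fun z => ?_⟩
  · show f (z + k + t) = f (z + t)
    rw [show z + k + t = (z + t) + k by omega, hp]
  · show ∃ j, OmegaE Ω τ j (f (z + t)).2 (f (z + 1 + t)).1
    rw [show z + 1 + t = (z + t) + 1 by omega]
    exact hO (z + t)

lemma trunc_O {k : ℕ} {f : ℕ → ℕ × ℕ} (h : FCyc Ω τ k f) {s : ℕ} (hs : s + 1 ≤ k)
    (he : ∃ j, OmegaE Ω τ j (f s).2 (f 0).1) :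
    FCyc Ω τ (s + 1) (fun z => f (z % (s + 1))) := by
  obtain ⟨hk, hp, hM, hO⟩ := h
  refine ⟨by omega, fun z => ?_, fun z => hM _, fun z => ?_⟩
  · show f ((z + (s + 1)) % (s + 1)) = f (z % (s + 1))
    rw [Nat.add_mod_right]
  · show ∃ j, OmegaE Ω τ j (f (z % (s + 1))).2 (f ((z + 1) % (s + 1))).1
    rw [mod_step (by omega)]
    by_cases hcase : z % (s + 1) = (s + 1) - 1
    · rw [if_pos hcase, hcase]
      simpa using he
    · rw [if_neg hcase]
      exact hO _

lemma trunc_M {k : ℕ} {f : ℕ → ℕ × ℕ} (h : FCyc Ω τ k f) {t : ℕ} (ht1 : 1 ≤ t) (ht2 : t < k)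
    (he : ∃ i, Mrel τ i (f 0).1 (f t).2) :
    FCyc Ω τ (k - t)
      (fun z => if z % (k - t) = 0 then ((f 0).1, (f t).2) else f (t + z % (k - t))) := by
  obtain ⟨hk, hp, hM, hO⟩ := h
  have hk' : 1 ≤ k - t := by omega
  have hf0 : f k = f 0 := per_mod hp (by simp [Nat.mod_self])
  refine ⟨hk', fun z => ?_, fun z => ?_, fun z => ?_⟩
  · simp only [Nat.add_mod_right]
  · by_cases h0 : z % (k - t) = 0
    · simp only [if_pos h0]
      exact he
    · simp only [if_neg h0]
      exact hM _
  · have hstep := mod_step (m := k - t) (z := z) (by omega)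
    by_cases h0 : z % (k - t) = 0
    · by_cases h1 : k - t = 1
      · have hz1 : (z + 1) % (k - t) = 0 := by rw [h1]; exact Nat.mod_one _
        simp only [if_pos h0, if_pos hz1]
        obtain ⟨j, hj⟩ := hO t
        have e : f (t + 1) = f 0 := by rw [show t + 1 = k by omega, hf0]
        exact ⟨j, e ▸ hj⟩
      · have hz1 : (z + 1) % (k - t) = 1 := by rw [hstep, if_neg (by omega), h0]
        simp only [if_pos h0, hz1, if_neg (by omega : ¬ (1 : ℕ) = 0)]
        exact hO t
    · by_cases h1 : z % (k - t) = (k - t) - 1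
      · have hz1 : (z + 1) % (k - t) = 0 := by rw [hstep, if_pos h1]
        simp only [if_neg h0, hz1, if_pos rfl]
        rw [h1, show t + ((k - t) - 1) = k - 1 by omega]
        obtain ⟨j, hj⟩ := hO (k - 1)
        have e : f (k - 1 + 1) = f 0 := by rw [show k - 1 + 1 = k by omega, hf0]
        exact ⟨j, e ▸ hj⟩
      · have hz1 : (z + 1) % (k - t) = z % (k - t) + 1 := by rw [hstep, if_neg h1]
        simp only [if_neg h0, hz1, if_neg (by omega : ¬ z % (k - t) + 1 = 0)]
        rw [show t + (z % (k - t) + 1) = (t + z % (k - t)) + 1 by omega]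
        exact hO _

lemma transGen_path {R : ℕ → ℕ → Prop} {a b : ℕ} (h : Relation.TransGen R a b) :
    ∃ (len : ℕ) (p : ℕ → ℕ), 1 ≤ len ∧ p 0 = a ∧ p len = b ∧
      ∀ z < len, R (p z) (p (z + 1)) := by
  induction h with
  | single hr =>
    rename_i c
    refine ⟨1, fun z => if z = 0 then a else c, le_refl 1, by simp, by simp, ?_⟩
    intro z hz
    interval_cases z
    simpa using hr
  | tail h1 hr ih =>
    rename_i b' c
    obtain ⟨len, p, hl1, h0, hl, he⟩ := ih
    refine ⟨len + 1, fun z => if z ≤ len then p z else c, by omega, by simp [h0],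
      by simp only [if_neg (by omega : ¬ len + 1 ≤ len)], ?_⟩
    intro z hz
    by_cases hzl : z < len
    · simp only [if_pos (show z ≤ len by omega), if_pos (show z + 1 ≤ len by omega)]
      exact he z hzl
    · have hz2 : z = len := by omega
      simp only [if_pos (show z ≤ len by omega), if_neg (show ¬ z + 1 ≤ len by omega)]
      rw [hz2, hl]
      exact hr

lemma hasCycle_cwalk (h : HasCycle Ω τ) : ∃ len p, CWalk Ω τ len p := by
  obtain ⟨x, hx⟩ := h
  obtain ⟨len, p, h1, h0, hl, he⟩ := transGen_path hx
  refine ⟨len, fun z => p (z % len), h1, fun z => ?_, fun z => ?_⟩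
  · show p ((z + len) % len) = p (z % len)
    rw [Nat.add_mod_right]
  · show GEdge Ω τ (p (z % len)) (p ((z + 1) % len))
    rw [mod_step h1]
    by_cases hc : z % len = len - 1
    · rw [if_pos hc, hc]
      have hend := he (len - 1) (by omega)
      rw [show len - 1 + 1 = len by omega, hl, ← h0] at hend
      exact hend
    · rw [if_neg hc]
      exact he _ (Nat.mod_lt _ (by omega))

lemma cwalk_fcyc (hΩ : IsWitness Ω) (hU : Unambiguous τ) :
    ∀ len p, CWalk Ω τ len p → ∃ k f, FCyc Ω τ k f := by
  intro len
  induction len using Nat.strong_induction_on with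
  | _ len IH =>
  intro p hw
  obtain ⟨hlen, hp, he⟩ := hw
  rcases eq_or_lt_of_le hlen with h1 | h2
  · -- len = 1 : self loop, impossible
    exfalso
    have hpp : p 1 = p 0 := by
      have h' := hp 0
      rw [← h1] at h'
      simpa using h'
    have hloop := he 0
    simp only [Nat.zero_add] at hloop
    rw [hpp] at hloop
    rcases hloop with ⟨i, hm⟩ | ⟨j, ho⟩
    · exact absurd hm.2.2 (lt_irrefl _)
    · exact omegaE_irrefl hΩ hU ho
  · -- len ≥ 2
    have key : ∀ z, GEdge Ω τ (p z) (p (z + 2)) → ∃ k f, FCyc Ω τ k f := by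
      intro z hcomp
      apply IH (len - 1) (by omega)
        (fun w => if w % (len - 1) = 0 then p z else p (z + 1 + w % (len - 1)))
      refine ⟨by omega, fun w => by simp only [Nat.add_mod_right], fun w => ?_⟩
      have hstep := mod_step (m := len - 1) (z := w) (by omega)
      by_cases h0 : w % (len - 1) = 0
      · by_cases hl1 : len - 1 = 1
        · have hz1 : (w + 1) % (len - 1) = 0 := by rw [hl1]; exact Nat.mod_one _
          simp only [if_pos h0, if_pos hz1]
          have e : p (z + 2) = p z := by
            have h' := hp z
            rw [show z + len = z + 2 by omega] at h'
            exact h'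
          exact e ▸ hcomp
        · have hz1 : (w + 1) % (len - 1) = 1 := by rw [hstep, if_neg (by omega), h0]
          simp only [if_pos h0, hz1, if_neg (by omega : ¬ (1 : ℕ) = 0)]
          rw [show z + 1 + 1 = z + 2 by omega]
          exact hcomp
      · by_cases h1 : w % (len - 1) = (len - 1) - 1
        · have hz1 : (w + 1) % (len - 1) = 0 := by rw [hstep, if_pos h1]
          simp only [if_neg h0, hz1, if_pos rfl]
          rw [h1, show z + 1 + ((len - 1) - 1) = z + len - 1 by omega]
          have hend := he (z + len - 1)
          rw [show z + len - 1 + 1 = z + len by omega, hp] at hend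
          exact hend
        · have hz1 : (w + 1) % (len - 1) = w % (len - 1) + 1 := by rw [hstep, if_neg h1]
          simp only [if_neg h0, hz1, if_neg (by omega : ¬ w % (len - 1) + 1 = 0)]
          rw [show z + 1 + (w % (len - 1) + 1) = (z + 1 + w % (len - 1)) + 1 by omega]
          exact he _
    by_cases hM2 : ∃ z, (∃ i, Mrel τ i (p z) (p (z + 1))) ∧ (∃ i, Mrel τ i (p (z + 1)) (p (z + 1 + 1)))
    · obtain ⟨z, ⟨i1, hm1⟩, ⟨i2, hm2⟩⟩ := hM2
      exact key z (Or.inl ⟨i1, Mrel_comp hm1 hm2⟩)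
    by_cases hO2 : ∃ z, (∃ j, OmegaE Ω τ j (p z) (p (z + 1))) ∧ (∃ j, OmegaE Ω τ j (p (z + 1)) (p (z + 1 + 1)))
    · obtain ⟨z, ⟨j1, ho1⟩, ⟨j2, ho2⟩⟩ := hO2
      exact key z (Or.inr ⟨j1, omegaE_comp hΩ hU ho1 ho2⟩)
    -- alternation
    push_neg at hM2 hO2
    set M : ℕ → Prop := fun z => ∃ i, Mrel τ i (p z) (p (z + 1)) with hMdef
    set O : ℕ → Prop := fun z => ∃ j, OmegaE Ω τ j (p z) (p (z + 1)) with hOdef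
    have hMO : ∀ z, M z ∨ O z := fun z => he z
    have hM2' : ∀ z, M z → ¬ M (z + 1) := by
      intro z h h'
      obtain ⟨i, hi⟩ := h'
      exact hM2 z h i hi
    have hO2' : ∀ z, O z → ¬ O (z + 1) := by
      intro z h h'
      obtain ⟨j, hj⟩ := h'
      exact hO2 z h j hj
    have hflip : ∀ z, M (z + 1) ↔ ¬ M z := by
      intro z
      constructor
      · intro hm1 hm0
        exact hM2' z hm0 hm1
      · intro hn
        rcases hMO z with hm | ho
        · exact absurd hm hn
        · rcases hMO (z + 1) with hm | ho1
          · exact hm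
          · exact absurd ho1 (hO2' z ho)
    have hpar : ∀ c z, M (z + 2 * c) ↔ M z := by
      intro c
      induction c with
      | zero => intro z; rw [Nat.mul_zero, Nat.add_zero]
      | succ c ih =>
        intro z
        rw [show z + 2 * (c + 1) = z + 2 * c + 1 + 1 by ring, hflip, hflip, not_not]
        exact ih z
    have hMper : ∀ z, M (z + len) ↔ M z := by
      intro z
      have e1 : p (z + len) = p z := hp z
      have e2 : p (z + len + 1) = p (z + 1) := by
        rw [show z + len + 1 = (z + 1) + len by omega, hp]
      rw [hMdef]
      simp only []
      rw [e1, e2]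
    have heven : len % 2 = 0 := by
      by_contra hodd
      have h2c : len = 2 * (len / 2) + 1 := by omega
      have hA : M len ↔ M 0 := by
        have h' := hMper 0
        rwa [Nat.zero_add] at h'
      have hB : M len ↔ ¬ M 0 := by
        rw [h2c, show 2 * (len / 2) + 1 = 0 + 2 * (len / 2) + 1 by omega, hflip, hpar]
      rcases Classical.em (M 0) with h | h
      · exact (hB.mp (hA.mpr h)) h
      · exact h (hA.mp (hB.mpr h))
    obtain ⟨z0, hz0⟩ : ∃ z0, M z0 := by
      rcases hMO 0 with h | h
      · exact ⟨0, h⟩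
      · rcases hMO 1 with h1 | h1
        · exact ⟨1, h1⟩
        · exact absurd h1 (hO2' 0 h)
    have hk1 : 1 ≤ len / 2 := by omega
    have hlen2 : len = 2 * (len / 2) := by omega
    set k := len / 2 with hkdef
    have hMev : ∀ c, M (z0 + 2 * c) := fun c => (hpar c z0).mpr hz0
    have hOodd : ∀ c, O (z0 + 2 * c + 1) := by
      intro c
      have hnm : ¬ M (z0 + 2 * c + 1) := by
        rw [hflip, not_not]
        exact hMev c
      rcases hMO (z0 + 2 * c + 1) with h | h
      · exact absurd h hnm
      · exact h
    refine ⟨k, fun t => (p (z0 + 2 * (t % k)), p (z0 + 2 * (t % k) + 1)), hk1, fun t => ?_,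
      fun t => ?_, fun t => ?_⟩
    · show (p (z0 + 2 * ((t + k) % k)), p (z0 + 2 * ((t + k) % k) + 1)) =
        (p (z0 + 2 * (t % k)), p (z0 + 2 * (t % k) + 1))
      rw [Nat.add_mod_right]
    · exact hMev (t % k)
    · obtain ⟨j, hj⟩ := hOodd (t % k)
      refine ⟨j, ?_⟩
      show OmegaE Ω τ j (p (z0 + 2 * (t % k) + 1)) (p (z0 + 2 * ((t + 1) % k)))
      have harg : p (z0 + 2 * (t % k) + 1 + 1) = p (z0 + 2 * ((t + 1) % k)) := by
        rcases Nat.lt_or_ge (t % k) (k - 1) with hlt | hge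
        · have e : (t + 1) % k = t % k + 1 := by
            rw [mod_step (by omega), if_neg (by omega)]
          rw [e, show z0 + 2 * (t % k) + 1 + 1 = z0 + 2 * (t % k + 1) by ring]
        · have hteq : t % k = k - 1 := by
            have := Nat.mod_lt t (show 0 < k by omega)
            omega
          have e : (t + 1) % k = 0 := by
            rw [mod_step (by omega), if_pos hteq]
          rw [e, hteq, show z0 + 2 * (k - 1) + 1 + 1 = z0 + len by omega, hp,
            Nat.mul_zero, Nat.add_zero]
      rw [← harg]
      exact hj

lemma fcyc_nice (hΩ : IsWitness Ω) (hU : Unambiguous τ) (hC : Causal τ) :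
    ∀ k f, FCyc Ω τ k f → ∃ k' u v, NiceCycle Ω τ k' u v := by
  intro k
  induction k using Nat.strong_induction_on with
  | _ k IH =>
  intro f hf
  have hf' := hf
  obtain ⟨hk, hp, hM, hO⟩ := hf'
  have hpm : ∀ {a b : ℕ}, a % k = b % k → f a = f b := fun h => per_mod hp h
  have key : ∀ x y : ℕ, x < k → y < k → x ≠ y →
      ∃ t, 1 ≤ t ∧ t < k ∧ (t + y) % k = x % k := by
    intro x y hx hy hne
    rcases Nat.lt_or_ge y x with h | h
    · exact ⟨x - y, by omega, by omega, by rw [show x - y + y = x by omega]⟩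
    · refine ⟨x + k - y, by omega, by omega, ?_⟩
      rw [show x + k - y + y = x + k by omega, Nat.add_mod_right]
  by_cases hCc : ∃ x, x < k ∧ ∃ y, y < k ∧ (f x).1 = (f y).2
  · obtain ⟨x, hx, y, hy, hxy⟩ := hCc
    rcases eq_or_ne x y with rfl | hne
    · exfalso
      obtain ⟨i, hm⟩ := hM x
      have hlt := hm.2.2
      rw [hxy] at hlt
      exact lt_irrefl _ hlt
    · obtain ⟨t, ht1, ht2, hteq⟩ := key x y hx hy hne
      obtain ⟨i0, hm0⟩ := hM y
      obtain ⟨i1, hm1⟩ := hM x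
      rw [hxy] at hm1
      have hcomp : Mrel τ i0 (f y).1 (f x).2 := Mrel_comp hm0 hm1
      have hrot : FCyc Ω τ k (fun z => f (z + y)) := FCyc_rot hf y
      have he : ∃ i, Mrel τ i ((fun z => f (z + y)) 0).1 ((fun z => f (z + y)) t).2 := by
        refine ⟨i0, ?_⟩
        show Mrel τ i0 (f (0 + y)).1 (f (t + y)).2
        rw [Nat.zero_add, hpm hteq]
        exact hcomp
      exact IH (k - t) (by omega) _ (trunc_M hrot ht1 ht2 he)
  by_cases hAc : ∃ x, x < k ∧ ∃ y, y < k ∧ x ≠ y ∧ (f x).1 = (f y).1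
  · obtain ⟨x, hx, y, hy, hne, hxy⟩ := hAc
    obtain ⟨t, ht1, ht2, hteq⟩ := key x y hx hy hne
    have hrot : FCyc Ω τ k (fun z => f (z + (t + y))) := FCyc_rot hf (t + y)
    obtain ⟨j, hj⟩ := hO (k - 1 + y)
    have he : ∃ j', OmegaE Ω τ j' ((fun z => f (z + (t + y))) (k - 1 - t)).2
        ((fun z => f (z + (t + y))) 0).1 := by
      refine ⟨j, ?_⟩
      show OmegaE Ω τ j (f (k - 1 - t + (t + y))).2 (f (0 + (t + y))).1
      have e1 : f (t + y) = f x := hpm hteq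
      have e2 : f (k - 1 + y + 1) = f y := by
        rw [show k - 1 + y + 1 = y + k by omega, hp]
      rw [show k - 1 - t + (t + y) = k - 1 + y by omega, Nat.zero_add, e1, hxy, ← e2]
      exact hj
    exact IH (k - 1 - t + 1) (by omega) _ (trunc_O hrot (by omega) he)
  by_cases hBc : ∃ x, x < k ∧ ∃ y, y < k ∧ x ≠ y ∧ (f x).2 = (f y).2
  · obtain ⟨x, hx, y, hy, hne, hxy⟩ := hBc
    obtain ⟨t, ht1, ht2, hteq⟩ := key y x hy hx hne.symm
    have hrot : FCyc Ω τ k (fun z => f (z + (t + 1 + x))) := FCyc_rot hf (t + 1 + x)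
    obtain ⟨j, hj⟩ := hO (t + x)
    have he : ∃ j', OmegaE Ω τ j' ((fun z => f (z + (t + 1 + x))) (k - 1 - t)).2
        ((fun z => f (z + (t + 1 + x))) 0).1 := by
      refine ⟨j, ?_⟩
      show OmegaE Ω τ j (f (k - 1 - t + (t + 1 + x))).2 (f (0 + (t + 1 + x))).1
      have e1 : f (k - 1 - t + (t + 1 + x)) = f x := by
        rw [show k - 1 - t + (t + 1 + x) = x + k by omega, hp]
      have e2 : f (t + x) = f y := hpm hteq
      rw [e1, Nat.zero_add, hxy, ← e2, show t + 1 + x = t + x + 1 by omega]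
      exact hj
    exact IH (k - 1 - t + 1) (by omega) _ (trunc_O hrot (by omega) he)
  by_cases hDc : ∃ x, x < k ∧ ∃ y, y < k ∧ x ≠ y ∧
      ∃ i, Mrel τ i (f x).1 (f x).2 ∧ Mrel τ i (f y).1 (f y).2
  · obtain ⟨x, hx, y, hy, hne, i, hmx, hmy⟩ := hDc
    rcases Mrel_short hmx hmy with hs | hs
    · obtain ⟨t, ht1, ht2, hteq⟩ := key y x hy hx hne.symm
      have hrot : FCyc Ω τ k (fun z => f (z + x)) := FCyc_rot hf x
      have he : ∃ i', Mrel τ i' ((fun z => f (z + x)) 0).1 ((fun z => f (z + x)) t).2 := by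
        refine ⟨i, ?_⟩
        show Mrel τ i (f (0 + x)).1 (f (t + x)).2
        rw [Nat.zero_add, hpm hteq]
        exact hs
      exact IH (k - t) (by omega) _ (trunc_M hrot ht1 ht2 he)
    · obtain ⟨t, ht1, ht2, hteq⟩ := key x y hx hy hne
      have hrot : FCyc Ω τ k (fun z => f (z + y)) := FCyc_rot hf y
      have he : ∃ i', Mrel τ i' ((fun z => f (z + y)) 0).1 ((fun z => f (z + y)) t).2 := by
        refine ⟨i, ?_⟩
        show Mrel τ i (f (0 + y)).1 (f (t + y)).2
        rw [Nat.zero_add, hpm hteq]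
        exact hs
      exact IH (k - t) (by omega) _ (trunc_M hrot ht1 ht2 he)
  by_cases hEc : ∃ x, x < k ∧ ∃ y, y < k ∧ x ≠ y ∧
      ∃ j, OmegaE Ω τ j (f x).2 (f (x + 1)).1 ∧ OmegaE Ω τ j (f y).2 (f (y + 1)).1
  · obtain ⟨x, hx, y, hy, hne, j, hox, hoy⟩ := hEc
    obtain ⟨t, ht1, ht2, hteq⟩ := key y x hy hx hne.symm
    rcases omegaE_cmp hΩ hU hC hox hoy with hcmp | hcmp
    · have hrot : FCyc Ω τ k (fun z => f (z + (t + 1 + x))) := FCyc_rot hf (t + 1 + x)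
      have he : ∃ j', OmegaE Ω τ j' ((fun z => f (z + (t + 1 + x))) (k - 1 - t)).2
          ((fun z => f (z + (t + 1 + x))) 0).1 := by
        refine ⟨j, ?_⟩
        show OmegaE Ω τ j (f (k - 1 - t + (t + 1 + x))).2 (f (0 + (t + 1 + x))).1
        have e1 : f (k - 1 - t + (t + 1 + x)) = f x := by
          rw [show k - 1 - t + (t + 1 + x) = x + k by omega, hp]
        have e2 : f (t + 1 + x) = f (y + 1) := by
          apply hpm
          have h' : Nat.ModEq k (t + x) y := hteq
          have h'' := h'.add_right 1
          rw [show t + 1 + x = t + x + 1 by omega]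
          exact h''
        rw [e1, Nat.zero_add, e2]
        exact hcmp
      exact IH (k - 1 - t + 1) (by omega) _ (trunc_O hrot (by omega) he)
    · have hrot : FCyc Ω τ k (fun z => f (z + (x + 1))) := FCyc_rot hf (x + 1)
      have he : ∃ j', OmegaE Ω τ j' ((fun z => f (z + (x + 1))) (t - 1)).2
          ((fun z => f (z + (x + 1))) 0).1 := by
        refine ⟨j, ?_⟩
        show OmegaE Ω τ j (f (t - 1 + (x + 1))).2 (f (0 + (x + 1))).1
        have e1 : f (t - 1 + (x + 1)) = f y := by
          rw [show t - 1 + (x + 1) = t + x by omega]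
          exact hpm hteq
        rw [e1, Nat.zero_add]
        exact hcmp
      exact IH (t - 1 + 1) (by omega) _ (trunc_O hrot (by omega) he)
  · -- no violation: the cycle itself is nice
    push_neg at hCc hAc hBc hDc hEc
    have ecyc : ∀ x, 1 ≤ x → x ≤ k → f (cyc k x - 1) = f (x - 1 + 1) := by
      intro x hx1 hx2
      unfold cyc
      by_cases hxk : x = k
      · rw [if_pos hxk]
        apply hpm
        simp [show x - 1 + 1 = k by omega, Nat.mod_self]
      · rw [if_neg hxk]
        congr 1
        omega
    refine ⟨k, fun x => (f (x - 1)).1, fun x => (f (x - 1)).2, hk, ?_, ?_, ?_, ?_, ?_, ?_, ?_⟩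
    · intro x hx y hy hne
      obtain ⟨hx1, hx2⟩ := Set.mem_Icc.mp hx
      obtain ⟨hy1, hy2⟩ := Set.mem_Icc.mp hy
      exact hAc (x - 1) (by omega) (y - 1) (by omega) (by omega)
    · intro x hx y hy hne
      obtain ⟨hx1, hx2⟩ := Set.mem_Icc.mp hx
      obtain ⟨hy1, hy2⟩ := Set.mem_Icc.mp hy
      exact hBc (x - 1) (by omega) (y - 1) (by omega) (by omega)
    · intro x hx y hy
      obtain ⟨hx1, hx2⟩ := Set.mem_Icc.mp hx
      obtain ⟨hy1, hy2⟩ := Set.mem_Icc.mp hy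
      exact hCc (x - 1) (by omega) (y - 1) (by omega)
    · intro x hx
      exact hM (x - 1)
    · intro x hx
      obtain ⟨hx1, hx2⟩ := Set.mem_Icc.mp hx
      obtain ⟨j, hj⟩ := hO (x - 1)
      refine ⟨j, ?_⟩
      show OmegaE Ω τ j (f (x - 1)).2 (f (cyc k x - 1)).1
      rw [ecyc x hx1 hx2]
      exact hj
    · intro x hx y hy hne i h1 h2
      obtain ⟨hx1, hx2⟩ := Set.mem_Icc.mp hx
      obtain ⟨hy1, hy2⟩ := Set.mem_Icc.mp hy
      exact hDc (x - 1) (by omega) (y - 1) (by omega) (by omega) i h1 h2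
    · intro x hx y hy hne j h1 h2
      obtain ⟨hx1, hx2⟩ := Set.mem_Icc.mp hx
      obtain ⟨hy1, hy2⟩ := Set.mem_Icc.mp hy
      have h1' : OmegaE Ω τ j (f (x - 1)).2 (f (x - 1 + 1)).1 := by
        rw [← ecyc x hx1 hx2]
        exact h1
      have h2' : OmegaE Ω τ j (f (y - 1)).2 (f (y - 1 + 1)).1 := by
        rw [← ecyc y hy1 hy2]
        exact h2
      exact hEc (x - 1) (by omega) (y - 1) (by omega) (by omega) j h1' h2'

lemma nice_bound {n m : ℕ} (hR : InRange n m τ) {k : ℕ} {u v : ℕ → ℕ}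
    (h : NiceCycle Ω τ k u v) : k ≤ n ∧ k ≤ m := by
  obtain ⟨hk, hu, hv, huv, hMex, hOex, hMd, hOd⟩ := h
  have hev : ∀ x : ℕ, x ∈ Dom τ → ev τ x ∈ τ := by
    intro x hx
    obtain ⟨hx1, hx2⟩ := hx
    have hlt : x - 1 < τ.length := by omega
    rw [ev, List.getD_eq_getElem τ default hlt]
    exact List.getElem_mem hlt
  constructor
  · have hch : ∀ x : ℕ, ∃ i, x ∈ Set.Icc 1 k → Mrel τ i (u x) (v x) := by
      intro x
      by_cases hx : x ∈ Set.Icc 1 k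
      · obtain ⟨i, hi⟩ := hMex x hx
        exact ⟨i, fun _ => hi⟩
      · exact ⟨0, fun hx' => absurd hx' hx⟩
    choose I hI using hch
    have hcard := Finset.card_le_card_of_injOn I
      (s := Finset.Icc 1 k) (t := Finset.Icc 1 n) ?_ ?_
    · simpa using hcard
    · intro a ha
      rw [Finset.mem_coe, Finset.mem_Icc] at ha
      have ha' : a ∈ Set.Icc 1 k := Set.mem_Icc.mpr ha
      have hm := hI a ha'
      have hdom : u a ∈ Dom τ := hm.1.1
      have hproc : (ev τ (u a)).proc = I a := hm.1.2
      obtain ⟨hp1, hp2, -, -⟩ := hR _ (hev (u a) hdom)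
      rw [hproc] at hp1 hp2
      rw [Finset.mem_coe, Finset.mem_Icc]
      exact ⟨hp1, hp2⟩
    · intro a ha b hb hab
      by_contra hne
      have ha' : a ∈ Set.Icc 1 k := by simpa using ha
      have hb' : b ∈ Set.Icc 1 k := by simpa using hb
      exact hMd a ha' b hb' hne (I a) (hI a ha') (hab.symm ▸ hI b hb')
  · have hch : ∀ x : ℕ, ∃ j, x ∈ Set.Icc 1 k → OmegaE Ω τ j (v x) (u (cyc k x)) := by
      intro x
      by_cases hx : x ∈ Set.Icc 1 k
      · obtain ⟨j, hj⟩ := hOex x hx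
        exact ⟨j, fun _ => hj⟩
      · exact ⟨0, fun hx' => absurd hx' hx⟩
    choose J hJ using hch
    have hcard := Finset.card_le_card_of_injOn J
      (s := Finset.Icc 1 k) (t := Finset.Icc 1 m) ?_ ?_
    · simpa using hcard
    · intro a ha
      rw [Finset.mem_coe, Finset.mem_Icc] at ha
      have ha' : a ∈ Set.Icc 1 k := Set.mem_Icc.mpr ha
      have hm := hJ a ha'
      have hdom : v a ∈ Dom τ := hm.1.1
      have hloc : (ev τ (v a)).loc = J a := hm.1.2
      obtain ⟨-, -, hp1, hp2⟩ := hR _ (hev (v a) hdom)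
      rw [hloc] at hp1 hp2
      rw [Finset.mem_coe, Finset.mem_Icc]
      exact ⟨hp1, hp2⟩
    · intro a ha b hb hab
      by_contra hne
      have ha' : a ∈ Set.Icc 1 k := by simpa using ha
      have hb' : b ∈ Set.Icc 1 k := by simpa using hb
      exact hOd a ha' b hb' hne (J a) (hJ a ha') (hab.symm ▸ hJ b hb')

end NiceProofAux

/-- If the constraint graph of an unambiguous causal trace has a cycle,
then it has a k-nice cycle for some 1 ≤ k ≤ min{n,m}. -/
theorem cycle_implies_nice_cycle
    (n m : ℕ) (hn : 1 ≤ n) (hm : 1 ≤ m)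
    (Ω : MTrace → ℕ → ℕ → ℕ → Prop) (hΩ : IsWitness Ω)
    (τ : MTrace) (hR : InRange n m τ) (hU : Unambiguous τ) (hC : Causal τ)
    (hcyc : HasCycle Ω τ) :
    ∃ k u v, 1 ≤ k ∧ k ≤ min n m ∧ NiceCycle Ω τ k u v := by
  obtain ⟨len, p, hw⟩ := NiceProofAux.hasCycle_cwalk hcyc
  obtain ⟨k0, f, hf⟩ := NiceProofAux.cwalk_fcyc hΩ hU len p hw
  obtain ⟨k, u, v, hnice⟩ := NiceProofAux.fcyc_nice hΩ hU hC k0 f hf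
  obtain ⟨h1, h2⟩ := NiceProofAux.nice_bound hR hnice
  exact ⟨k, u, v, hnice.1, le_min h1 h2, hnice⟩
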